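/- Let n be an odd positive squarefree integer and let d1, d2, d3 be nonzero squarefree integers such that d1·d2·d3 is a perfect square. Suppose the homogeneous system H1: −n·t² + d2·u2² − d3·u3² = 0, H2: −n·t² + d3·u3² − d1·u1² = 0, H3: 2n·t² + d1·u1² − d2·u2² = 0 has a nonzero solution (t,u1,u2,u3) ≠ (0,0,0,0) over ℝ and over ℚ_p for every prime p. Then d2 > 0, d1 divides 2n, d2 divides 2n, and d1 ≡ d2 (mod 2). -/

import Mathlib

lemma sf_factor {q d : ℤ} (hq : Prime q) (hsf : Squarefree d) (h : q ∣ d) :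
    ∃ e, d = q * e ∧ ¬ q ∣ e := by
  obtain ⟨e, rfl⟩ := h
  refine ⟨e, rfl, fun hqe => ?_⟩
  obtain ⟨f, rfl⟩ := hqe
  exact hq.not_unit (hsf q ⟨f, by ring⟩)

lemma tri {q d₁ d₂ d₃ m : ℤ} (hq : Prime q) (hsf₁ : Squarefree d₁) (hsf₂ : Squarefree d₂)
    (hsf₃ : Squarefree d₃) (hm : d₁ * d₂ * d₃ = m ^ 2) (h1 : q ∣ d₁) :
    (q ∣ d₂ ∧ ¬ q ∣ d₃) ∨ (q ∣ d₃ ∧ ¬ q ∣ d₂) := by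
  obtain ⟨a, ha, hqa⟩ := sf_factor hq hsf₁ h1
  have hqm : q ∣ m := hq.dvd_of_dvd_pow (⟨d₂ * d₃ * a, by rw [← hm, ha]; ring⟩ : q ∣ m ^ 2)
  obtain ⟨k, hk⟩ := hqm
  subst ha; subst hk
  have hcan : a * d₂ * d₃ = q * k ^ 2 := by
    apply mul_left_cancel₀ hq.ne_zero
    linear_combination hm
  have hor : q ∣ d₂ ∨ q ∣ d₃ := by
    have : q ∣ a * d₂ * d₃ := ⟨k ^ 2, hcan⟩
    rcases hq.dvd_mul.1 this with h | h
    · rcases hq.dvd_mul.1 h with h' | h'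
      · exact absurd h' hqa
      · exact Or.inl h'
    · exact Or.inr h
  have hnot : ¬ (q ∣ d₂ ∧ q ∣ d₃) := by
    rintro ⟨h2, h3⟩
    obtain ⟨b, hb, hqb⟩ := sf_factor hq hsf₂ h2
    obtain ⟨c, hc, hqc⟩ := sf_factor hq hsf₃ h3
    subst hb; subst hc
    have hk2 : k ^ 2 = q * (a * b * c) := by
      apply mul_left_cancel₀ hq.ne_zero
      linear_combination -hcan
    have hqk : q ∣ k := hq.dvd_of_dvd_pow ⟨a * b * c, hk2⟩
    obtain ⟨j, hj⟩ := hqk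
    subst hj
    have : a * b * c = q * j ^ 2 := by
      apply mul_left_cancel₀ hq.ne_zero
      linear_combination -hk2
    have : q ∣ a * b * c := ⟨j ^ 2, this⟩
    rcases hq.dvd_mul.1 this with h | h
    · rcases hq.dvd_mul.1 h with h' | h'
      · exact hqa h'
      · exact hqb h'
    · exact hqc h
  rcases hor with h | h
  · exact Or.inl ⟨h, fun h' => hnot ⟨h, h'⟩⟩
  · exact Or.inr ⟨h, fun h' => hnot ⟨h', h⟩⟩

lemma pick {d b : ℤ} (hd : d ≠ 0) (hsf : Squarefree d) (hndvd : ¬ d ∣ b) :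
    ∃ p : ℕ, p.Prime ∧ (p : ℤ) ∣ d ∧ ¬ (p : ℤ) ∣ b := by
  set g : ℤ := (Int.gcd d b : ℤ) with hg
  have hgd : g ∣ d := Int.gcd_dvd_left d b
  have hgb : g ∣ b := Int.gcd_dvd_right d b
  obtain ⟨h, hh⟩ := hgd
  have hhu : ¬ IsUnit h := by
    intro hu
    rcases Int.isUnit_iff.1 hu with rfl | rfl
    · exact hndvd (by rw [hh, mul_one] at *; exact hgb)
    · apply hndvd
      have : d ∣ g := ⟨-1, by rw [hh]; ring⟩
      exact this.trans hgb
  have hh0 : h ≠ 0 := by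
    rintro rfl
    exact hd (by rw [hh, mul_zero])
  have hna : h.natAbs ≠ 1 := fun h1 => hhu (Int.isUnit_iff_natAbs_eq.2 h1)
  obtain ⟨q, hq, hqh⟩ := Int.exists_prime_and_dvd hna
  refine ⟨q.natAbs, Int.prime_iff_natAbs_prime.1 hq, ?_, ?_⟩
  · rw [Int.natAbs_dvd]
    exact hqh.trans ⟨g, by rw [hh]; ring⟩
  · rw [Int.natAbs_dvd]
    intro hqb
    have hqd : q ∣ d := hqh.trans ⟨g, by rw [hh]; ring⟩
    have hqg : q ∣ g := Int.dvd_coe_gcd hqd hqb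
    have : q * q ∣ d := by
      rw [hh]
      exact mul_dvd_mul hqg hqh
    exact hq.not_unit (hsf q this)


lemma d2_pos (n : ℕ) (hnpos : 0 < n) (d₁ d₂ d₃ : ℤ) (hd₁ : d₁ ≠ 0) (hd₂ : d₂ ≠ 0)
    (hd₃ : d₃ ≠ 0) (m : ℤ) (hm : d₁ * d₂ * d₃ = m ^ 2)
    (hR : ∃ t u₁ u₂ u₃ : ℝ, ¬(t = 0 ∧ u₁ = 0 ∧ u₂ = 0 ∧ u₃ = 0) ∧
      -(n : ℝ) * t ^ 2 + (d₂ : ℝ) * u₂ ^ 2 - (d₃ : ℝ) * u₃ ^ 2 = 0 ∧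
      -(n : ℝ) * t ^ 2 + (d₃ : ℝ) * u₃ ^ 2 - (d₁ : ℝ) * u₁ ^ 2 = 0 ∧
      2 * (n : ℝ) * t ^ 2 + (d₁ : ℝ) * u₁ ^ 2 - (d₂ : ℝ) * u₂ ^ 2 = 0) : 0 < d₂ := by
  by_contra hcon
  obtain ⟨t, u₁, u₂, u₃, hnz, h1, h2, h3⟩ := hR
  have hd2neg : (d₂ : ℝ) < 0 := by
    have : d₂ < 0 := lt_of_le_of_ne (not_lt.1 hcon) hd₂
    exact_mod_cast this
  have hm0 : m ≠ 0 := by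
    rintro rfl
    have hz : d₁ * d₂ * d₃ = 0 := by simpa using hm
    rcases mul_eq_zero.1 hz with h | h
    · rcases mul_eq_zero.1 h with h' | h'
      · exact hd₁ h'
      · exact hd₂ h'
    · exact hd₃ h
  have hprod : (0 : ℝ) < (d₁ : ℝ) * d₂ * d₃ := by
    have h0 : (0:ℤ) < d₁ * d₂ * d₃ := by rw [hm]; positivity
    exact_mod_cast h0
  have hnR : (0 : ℝ) < (n : ℝ) := by exact_mod_cast hnpos
  have hd₁R : (d₁ : ℝ) ≠ 0 := by exact_mod_cast hd₁
  have hd₃R : (d₃ : ℝ) ≠ 0 := by exact_mod_cast hd₃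
  rcases hd₁R.lt_or_gt with hd1neg | hd1pos
  · -- d₁ < 0, then d₃ > 0
    have hd3pos : (0 : ℝ) < (d₃ : ℝ) := by nlinarith [mul_pos_of_neg_of_neg hd1neg hd2neg]
    have ht : t = 0 := by
      have ht2 : t ^ 2 ≤ 0 := by nlinarith [sq_nonneg u₂, sq_nonneg u₃]
      exact pow_eq_zero_iff two_ne_zero |>.1 (le_antisymm ht2 (sq_nonneg t))
    have hu2 : u₂ = 0 := by
      have : u₂ ^ 2 ≤ 0 := by nlinarith [sq_nonneg u₃]
      exact pow_eq_zero_iff two_ne_zero |>.1 (le_antisymm this (sq_nonneg u₂))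
    have hu3 : u₃ = 0 := by
      have : u₃ ^ 2 ≤ 0 := by nlinarith [sq_nonneg u₂]
      exact pow_eq_zero_iff two_ne_zero |>.1 (le_antisymm this (sq_nonneg u₃))
    have hu1 : u₁ = 0 := by
      have : u₁ ^ 2 ≤ 0 := by nlinarith [sq_nonneg t, sq_nonneg u₃]
      exact pow_eq_zero_iff two_ne_zero |>.1 (le_antisymm this (sq_nonneg u₁))
    exact hnz ⟨ht, hu1, hu2, hu3⟩
  · -- d₁ > 0
    have ht : t = 0 := by
      have ht2 : t ^ 2 ≤ 0 := by nlinarith [sq_nonneg u₁, sq_nonneg u₂]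
      exact pow_eq_zero_iff two_ne_zero |>.1 (le_antisymm ht2 (sq_nonneg t))
    have hu1 : u₁ = 0 := by
      have : u₁ ^ 2 ≤ 0 := by nlinarith [sq_nonneg t, sq_nonneg u₂]
      exact pow_eq_zero_iff two_ne_zero |>.1 (le_antisymm this (sq_nonneg u₁))
    have hu2 : u₂ = 0 := by
      have : u₂ ^ 2 ≤ 0 := by nlinarith [sq_nonneg t, sq_nonneg u₁]
      exact pow_eq_zero_iff two_ne_zero |>.1 (le_antisymm this (sq_nonneg u₂))
    have hu3 : u₃ = 0 := by
      have h0 : (d₃ : ℝ) * u₃ ^ 2 = 0 := by rw [ht, hu1] at h2; linarith [h2]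
      have : u₃ ^ 2 = 0 := by
        rcases mul_eq_zero.1 h0 with h | h
        · exact absurd h hd₃R
        · exact h
      exact pow_eq_zero_iff two_ne_zero |>.1 this
    exact hnz ⟨ht, hu1, hu2, hu3⟩

variable {p : ℕ} [hp : Fact p.Prime]

lemma dvd_cast_iff (k : ℤ) : (p : ℤ_[p]) ∣ (k : ℤ_[p]) ↔ (p : ℤ) ∣ k := by
  rw [← PadicInt.norm_int_lt_one_iff_dvd, PadicInt.norm_lt_one_iff_dvd]

lemma dvd_nat_cast_iff (k : ℕ) : (p : ℤ_[p]) ∣ (k : ℤ_[p]) ↔ (p : ℤ) ∣ (k : ℤ) := by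
  have h : ((k : ℤ) : ℤ_[p]) = (k : ℤ_[p]) := by push_cast; ring
  rw [← h, dvd_cast_iff]

lemma caseA1 (n : ℕ) (d₁ d₂ d₃ : ℤ) (hn : ¬ (p:ℤ) ∣ (n:ℤ)) (h1 : (p:ℤ) ∣ d₁) (h3 : (p:ℤ) ∣ d₃)
    (h2 : ¬ (p:ℤ) ∣ d₂) (hsf₁ : Squarefree d₁) (hsf₃ : Squarefree d₃)
    (T U₁ U₂ U₃ : ℤ_[p])
    (e1 : -(n : ℤ_[p]) * T ^ 2 + (d₂ : ℤ_[p]) * U₂ ^ 2 - (d₃ : ℤ_[p]) * U₃ ^ 2 = 0)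
    (e2 : -(n : ℤ_[p]) * T ^ 2 + (d₃ : ℤ_[p]) * U₃ ^ 2 - (d₁ : ℤ_[p]) * U₁ ^ 2 = 0)
    (e3 : 2 * (n : ℤ_[p]) * T ^ 2 + (d₁ : ℤ_[p]) * U₁ ^ 2 - (d₂ : ℤ_[p]) * U₂ ^ 2 = 0)
    (hprim : ¬((p:ℤ_[p]) ∣ T ∧ (p:ℤ_[p]) ∣ U₁ ∧ (p:ℤ_[p]) ∣ U₂ ∧ (p:ℤ_[p]) ∣ U₃)) : False := by
  have hP : Prime (p : ℤ_[p]) := PadicInt.prime_p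
  have hpz : Prime (p : ℤ) := Nat.prime_iff_prime_int.1 hp.out
  obtain ⟨a, ha, hpa⟩ := sf_factor hpz hsf₁ h1
  obtain ⟨c, hc, hpc⟩ := sf_factor hpz hsf₃ h3
  have hd1c : (p:ℤ_[p]) ∣ (d₁ : ℤ_[p]) := (dvd_cast_iff d₁).2 h1
  have hd3c : (p:ℤ_[p]) ∣ (d₃ : ℤ_[p]) := (dvd_cast_iff d₃).2 h3
  have hd2c : ¬ (p:ℤ_[p]) ∣ (d₂ : ℤ_[p]) := fun h => h2 ((dvd_cast_iff d₂).1 h)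
  have hnc : ¬ (p:ℤ_[p]) ∣ (n : ℤ_[p]) := fun h => hn ((dvd_nat_cast_iff n).1 h)
  have hd1eq : (d₁ : ℤ_[p]) = (p:ℤ_[p]) * (a : ℤ_[p]) := by rw [ha]; push_cast; ring
  have hd3eq : (d₃ : ℤ_[p]) = (p:ℤ_[p]) * (c : ℤ_[p]) := by rw [hc]; push_cast; ring
  have hpne : (p:ℤ_[p]) ≠ 0 := hP.ne_zero
  -- step 1 : p ∣ T
  have hnT : (p:ℤ_[p]) ∣ (n : ℤ_[p]) * T ^ 2 := by
    have hx : (n : ℤ_[p]) * T ^ 2 = (d₃ : ℤ_[p]) * U₃ ^ 2 - (d₁ : ℤ_[p]) * U₁ ^ 2 := by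
      linear_combination -e2
    rw [hx]
    exact dvd_sub (hd3c.mul_right _) (hd1c.mul_right _)
  have hT : (p:ℤ_[p]) ∣ T := by
    rcases hP.dvd_mul.1 hnT with h | h
    · exact absurd h hnc
    · exact hP.dvd_of_dvd_pow h
  -- step 2 : p ∣ U₂
  have hU2 : (p:ℤ_[p]) ∣ U₂ := by
    have hd : (p:ℤ_[p]) ∣ (d₂ : ℤ_[p]) * U₂ ^ 2 := by
      have hx : (d₂ : ℤ_[p]) * U₂ ^ 2 = (n : ℤ_[p]) * T ^ 2 + (d₃ : ℤ_[p]) * U₃ ^ 2 := by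
        linear_combination e1
      rw [hx]; exact dvd_add hnT (hd3c.mul_right _)
    rcases hP.dvd_mul.1 hd with h | h
    · exact absurd h hd2c
    · exact hP.dvd_of_dvd_pow h
  have hT2 : (p:ℤ_[p]) * (p:ℤ_[p]) ∣ T ^ 2 := by
    rw [← sq]; exact pow_dvd_pow_of_dvd hT 2
  have hU22 : (p:ℤ_[p]) * (p:ℤ_[p]) ∣ U₂ ^ 2 := by
    rw [← sq]; exact pow_dvd_pow_of_dvd hU2 2
  -- step 3 : p ∣ U₁
  have hU1 : (p:ℤ_[p]) ∣ U₁ := by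
    have hd : (p:ℤ_[p]) * (p:ℤ_[p]) ∣ (d₁ : ℤ_[p]) * U₁ ^ 2 := by
      have hx : (d₁ : ℤ_[p]) * U₁ ^ 2 =
          (d₂ : ℤ_[p]) * U₂ ^ 2 - (2 * (n : ℤ_[p])) * T ^ 2 := by
        linear_combination e3
      rw [hx]
      exact dvd_sub (hU22.mul_left _) (hT2.mul_left _)
    rw [hd1eq, mul_assoc] at hd
    have hd' : (p:ℤ_[p]) ∣ (a : ℤ_[p]) * U₁ ^ 2 := (mul_dvd_mul_iff_left hpne).1 hd
    rcases hP.dvd_mul.1 hd' with h | h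
    · exact absurd ((dvd_cast_iff a).1 h) hpa
    · exact hP.dvd_of_dvd_pow h
  -- step 4 : p ∣ U₃
  have hU3 : (p:ℤ_[p]) ∣ U₃ := by
    have hU12 : (p:ℤ_[p]) * (p:ℤ_[p]) ∣ (d₁ : ℤ_[p]) * U₁ ^ 2 :=
      mul_dvd_mul hd1c (hU1.trans (dvd_pow_self U₁ two_ne_zero))
    have hd : (p:ℤ_[p]) * (p:ℤ_[p]) ∣ (d₃ : ℤ_[p]) * U₃ ^ 2 := by
      have hx : (d₃ : ℤ_[p]) * U₃ ^ 2 = (n : ℤ_[p]) * T ^ 2 + (d₁ : ℤ_[p]) * U₁ ^ 2 := by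
        linear_combination e2
      rw [hx]
      exact dvd_add (hT2.mul_left _) hU12
    rw [hd3eq, mul_assoc] at hd
    have hd' : (p:ℤ_[p]) ∣ (c : ℤ_[p]) * U₃ ^ 2 := (mul_dvd_mul_iff_left hpne).1 hd
    rcases hP.dvd_mul.1 hd' with h | h
    · exact absurd ((dvd_cast_iff c).1 h) hpc
    · exact hP.dvd_of_dvd_pow h
  exact hprim ⟨hT, hU1, hU2, hU3⟩

lemma caseA2 (n : ℕ) (d₁ d₂ d₃ : ℤ) (hodd : p ≠ 2) (hn : ¬ (p:ℤ) ∣ (n:ℤ))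
    (h1 : (p:ℤ) ∣ d₁) (h2 : (p:ℤ) ∣ d₂) (h3 : ¬ (p:ℤ) ∣ d₃)
    (hsf₁ : Squarefree d₁) (hsf₂ : Squarefree d₂)
    (T U₁ U₂ U₃ : ℤ_[p])
    (e1 : -(n : ℤ_[p]) * T ^ 2 + (d₂ : ℤ_[p]) * U₂ ^ 2 - (d₃ : ℤ_[p]) * U₃ ^ 2 = 0)
    (e2 : -(n : ℤ_[p]) * T ^ 2 + (d₃ : ℤ_[p]) * U₃ ^ 2 - (d₁ : ℤ_[p]) * U₁ ^ 2 = 0)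
    (e3 : 2 * (n : ℤ_[p]) * T ^ 2 + (d₁ : ℤ_[p]) * U₁ ^ 2 - (d₂ : ℤ_[p]) * U₂ ^ 2 = 0)
    (hprim : ¬((p:ℤ_[p]) ∣ T ∧ (p:ℤ_[p]) ∣ U₁ ∧ (p:ℤ_[p]) ∣ U₂ ∧ (p:ℤ_[p]) ∣ U₃)) : False := by
  have hP : Prime (p : ℤ_[p]) := PadicInt.prime_p
  have hpz : Prime (p : ℤ) := Nat.prime_iff_prime_int.1 hp.out
  obtain ⟨a, ha, hpa⟩ := sf_factor hpz hsf₁ h1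
  obtain ⟨b, hb, hpb⟩ := sf_factor hpz hsf₂ h2
  have hd1c : (p:ℤ_[p]) ∣ (d₁ : ℤ_[p]) := (dvd_cast_iff d₁).2 h1
  have hd2c : (p:ℤ_[p]) ∣ (d₂ : ℤ_[p]) := (dvd_cast_iff d₂).2 h2
  have hd3c : ¬ (p:ℤ_[p]) ∣ (d₃ : ℤ_[p]) := fun h => h3 ((dvd_cast_iff d₃).1 h)
  have hnc : ¬ (p:ℤ_[p]) ∣ (n : ℤ_[p]) := fun h => hn ((dvd_nat_cast_iff n).1 h)
  have h2c : ¬ (p:ℤ_[p]) ∣ (2 : ℤ_[p]) := by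
    intro h
    have h2' : ((2:ℕ) : ℤ_[p]) = (2 : ℤ_[p]) := by push_cast; ring
    rw [← h2'] at h
    have := (dvd_nat_cast_iff 2).1 h
    have h2n : p ∣ 2 := Int.ofNat_dvd.mp (by exact_mod_cast this)
    rcases (Nat.dvd_prime Nat.prime_two).1 h2n with h' | h'
    · exact hp.out.ne_one h'
    · exact hodd h'
  have hd1eq : (d₁ : ℤ_[p]) = (p:ℤ_[p]) * (a : ℤ_[p]) := by rw [ha]; push_cast; ring
  have hd2eq : (d₂ : ℤ_[p]) = (p:ℤ_[p]) * (b : ℤ_[p]) := by rw [hb]; push_cast; ring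
  have hpne : (p:ℤ_[p]) ≠ 0 := hP.ne_zero
  -- step 1 : p ∣ T
  have hT : (p:ℤ_[p]) ∣ T := by
    have hd : (p:ℤ_[p]) ∣ (2 * (n : ℤ_[p])) * T ^ 2 := by
      have hx : (2 * (n : ℤ_[p])) * T ^ 2 = (d₂ : ℤ_[p]) * U₂ ^ 2 - (d₁ : ℤ_[p]) * U₁ ^ 2 := by
        linear_combination e3
      rw [hx]; exact dvd_sub (hd2c.mul_right _) (hd1c.mul_right _)
    rcases hP.dvd_mul.1 hd with h | h
    · rcases hP.dvd_mul.1 h with h' | h'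
      · exact absurd h' h2c
      · exact absurd h' hnc
    · exact hP.dvd_of_dvd_pow h
  have hnT : (p:ℤ_[p]) ∣ (n : ℤ_[p]) * T ^ 2 :=
    ((hT.trans (dvd_pow_self T two_ne_zero)).mul_left _)
  -- step 2 : p ∣ U₃
  have hU3 : (p:ℤ_[p]) ∣ U₃ := by
    have hd : (p:ℤ_[p]) ∣ (d₃ : ℤ_[p]) * U₃ ^ 2 := by
      have hx : (d₃ : ℤ_[p]) * U₃ ^ 2 = (n : ℤ_[p]) * T ^ 2 + (d₁ : ℤ_[p]) * U₁ ^ 2 := by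
        linear_combination e2
      rw [hx]; exact dvd_add hnT (hd1c.mul_right _)
    rcases hP.dvd_mul.1 hd with h | h
    · exact absurd h hd3c
    · exact hP.dvd_of_dvd_pow h
  have hT2 : (p:ℤ_[p]) * (p:ℤ_[p]) ∣ T ^ 2 := by
    rw [← sq]; exact pow_dvd_pow_of_dvd hT 2
  have hU32 : (p:ℤ_[p]) * (p:ℤ_[p]) ∣ U₃ ^ 2 := by
    rw [← sq]; exact pow_dvd_pow_of_dvd hU3 2
  -- step 3 : p ∣ U₂
  have hU2 : (p:ℤ_[p]) ∣ U₂ := by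
    have hd : (p:ℤ_[p]) * (p:ℤ_[p]) ∣ (d₂ : ℤ_[p]) * U₂ ^ 2 := by
      have hx : (d₂ : ℤ_[p]) * U₂ ^ 2 = (n : ℤ_[p]) * T ^ 2 + (d₃ : ℤ_[p]) * U₃ ^ 2 := by
        linear_combination e1
      rw [hx]
      exact dvd_add (hT2.mul_left _) (hU32.mul_left _)
    rw [hd2eq, mul_assoc] at hd
    have hd' : (p:ℤ_[p]) ∣ (b : ℤ_[p]) * U₂ ^ 2 := (mul_dvd_mul_iff_left hpne).1 hd
    rcases hP.dvd_mul.1 hd' with h | h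
    · exact absurd ((dvd_cast_iff b).1 h) hpb
    · exact hP.dvd_of_dvd_pow h
  -- step 4 : p ∣ U₁
  have hU1 : (p:ℤ_[p]) ∣ U₁ := by
    have hU22 : (p:ℤ_[p]) * (p:ℤ_[p]) ∣ (d₂ : ℤ_[p]) * U₂ ^ 2 :=
      mul_dvd_mul hd2c (hU2.trans (dvd_pow_self U₂ two_ne_zero))
    have hd : (p:ℤ_[p]) * (p:ℤ_[p]) ∣ (d₁ : ℤ_[p]) * U₁ ^ 2 := by
      have hx : (d₁ : ℤ_[p]) * U₁ ^ 2 =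
          (d₂ : ℤ_[p]) * U₂ ^ 2 - (2 * (n : ℤ_[p])) * T ^ 2 := by
        linear_combination e3
      rw [hx]
      exact dvd_sub hU22 (hT2.mul_left _)
    rw [hd1eq, mul_assoc] at hd
    have hd' : (p:ℤ_[p]) ∣ (a : ℤ_[p]) * U₁ ^ 2 := (mul_dvd_mul_iff_left hpne).1 hd
    rcases hP.dvd_mul.1 hd' with h | h
    · exact absurd ((dvd_cast_iff a).1 h) hpa
    · exact hP.dvd_of_dvd_pow h
  exact hprim ⟨hT, hU1, hU2, hU3⟩

lemma caseC (n : ℕ) (d₁ d₂ d₃ : ℤ) (hn : ¬ (p:ℤ) ∣ (n:ℤ))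
    (h1 : ¬ (p:ℤ) ∣ d₁) (h2 : (p:ℤ) ∣ d₂) (h3 : (p:ℤ) ∣ d₃)
    (hsf₂ : Squarefree d₂) (hsf₃ : Squarefree d₃)
    (T U₁ U₂ U₃ : ℤ_[p])
    (e1 : -(n : ℤ_[p]) * T ^ 2 + (d₂ : ℤ_[p]) * U₂ ^ 2 - (d₃ : ℤ_[p]) * U₃ ^ 2 = 0)
    (e2 : -(n : ℤ_[p]) * T ^ 2 + (d₃ : ℤ_[p]) * U₃ ^ 2 - (d₁ : ℤ_[p]) * U₁ ^ 2 = 0)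
    (e3 : 2 * (n : ℤ_[p]) * T ^ 2 + (d₁ : ℤ_[p]) * U₁ ^ 2 - (d₂ : ℤ_[p]) * U₂ ^ 2 = 0)
    (hprim : ¬((p:ℤ_[p]) ∣ T ∧ (p:ℤ_[p]) ∣ U₁ ∧ (p:ℤ_[p]) ∣ U₂ ∧ (p:ℤ_[p]) ∣ U₃)) : False := by
  have hP : Prime (p : ℤ_[p]) := PadicInt.prime_p
  have hpz : Prime (p : ℤ) := Nat.prime_iff_prime_int.1 hp.out
  obtain ⟨b, hb, hpb⟩ := sf_factor hpz hsf₂ h2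
  obtain ⟨c, hc, hpc⟩ := sf_factor hpz hsf₃ h3
  have hd2c : (p:ℤ_[p]) ∣ (d₂ : ℤ_[p]) := (dvd_cast_iff d₂).2 h2
  have hd3c : (p:ℤ_[p]) ∣ (d₃ : ℤ_[p]) := (dvd_cast_iff d₃).2 h3
  have hd1c : ¬ (p:ℤ_[p]) ∣ (d₁ : ℤ_[p]) := fun h => h1 ((dvd_cast_iff d₁).1 h)
  have hnc : ¬ (p:ℤ_[p]) ∣ (n : ℤ_[p]) := fun h => hn ((dvd_nat_cast_iff n).1 h)
  have hd2eq : (d₂ : ℤ_[p]) = (p:ℤ_[p]) * (b : ℤ_[p]) := by rw [hb]; push_cast; ring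
  have hd3eq : (d₃ : ℤ_[p]) = (p:ℤ_[p]) * (c : ℤ_[p]) := by rw [hc]; push_cast; ring
  have hpne : (p:ℤ_[p]) ≠ 0 := hP.ne_zero
  -- step 1 : p ∣ T
  have hT : (p:ℤ_[p]) ∣ T := by
    have hd : (p:ℤ_[p]) ∣ (n : ℤ_[p]) * T ^ 2 := by
      have hx : (n : ℤ_[p]) * T ^ 2 = (d₂ : ℤ_[p]) * U₂ ^ 2 - (d₃ : ℤ_[p]) * U₃ ^ 2 := by
        linear_combination -e1
      rw [hx]; exact dvd_sub (hd2c.mul_right _) (hd3c.mul_right _)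
    rcases hP.dvd_mul.1 hd with h | h
    · exact absurd h hnc
    · exact hP.dvd_of_dvd_pow h
  have hT2 : (p:ℤ_[p]) * (p:ℤ_[p]) ∣ T ^ 2 := by
    rw [← sq]; exact pow_dvd_pow_of_dvd hT 2
  have hTsq : (p:ℤ_[p]) ∣ T ^ 2 := hT.trans (dvd_pow_self T two_ne_zero)
  -- step 2 : p ∣ U₁
  have hU1 : (p:ℤ_[p]) ∣ U₁ := by
    have hd : (p:ℤ_[p]) ∣ (d₁ : ℤ_[p]) * U₁ ^ 2 := by
      have hx : (d₁ : ℤ_[p]) * U₁ ^ 2 =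
          (d₂ : ℤ_[p]) * U₂ ^ 2 - (2 * (n : ℤ_[p])) * T ^ 2 := by
        linear_combination e3
      rw [hx]
      exact dvd_sub (hd2c.mul_right _) (hTsq.mul_left _)
    rcases hP.dvd_mul.1 hd with h | h
    · exact absurd h hd1c
    · exact hP.dvd_of_dvd_pow h
  have hU12 : (p:ℤ_[p]) * (p:ℤ_[p]) ∣ U₁ ^ 2 := by
    rw [← sq]; exact pow_dvd_pow_of_dvd hU1 2
  -- step 3 : p ∣ U₃
  have hU3 : (p:ℤ_[p]) ∣ U₃ := by
    have hd : (p:ℤ_[p]) * (p:ℤ_[p]) ∣ (d₃ : ℤ_[p]) * U₃ ^ 2 := by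
      have hx : (d₃ : ℤ_[p]) * U₃ ^ 2 = (n : ℤ_[p]) * T ^ 2 + (d₁ : ℤ_[p]) * U₁ ^ 2 := by
        linear_combination e2
      rw [hx]
      exact dvd_add (hT2.mul_left _) (hU12.mul_left _)
    rw [hd3eq, mul_assoc] at hd
    have hd' : (p:ℤ_[p]) ∣ (c : ℤ_[p]) * U₃ ^ 2 := (mul_dvd_mul_iff_left hpne).1 hd
    rcases hP.dvd_mul.1 hd' with h | h
    · exact absurd ((dvd_cast_iff c).1 h) hpc
    · exact hP.dvd_of_dvd_pow h
  -- step 4 : p ∣ U₂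
  have hU2 : (p:ℤ_[p]) ∣ U₂ := by
    have hU32 : (p:ℤ_[p]) * (p:ℤ_[p]) ∣ (d₃ : ℤ_[p]) * U₃ ^ 2 :=
      mul_dvd_mul hd3c (hU3.trans (dvd_pow_self U₃ two_ne_zero))
    have hd : (p:ℤ_[p]) * (p:ℤ_[p]) ∣ (d₂ : ℤ_[p]) * U₂ ^ 2 := by
      have hx : (d₂ : ℤ_[p]) * U₂ ^ 2 = (n : ℤ_[p]) * T ^ 2 + (d₃ : ℤ_[p]) * U₃ ^ 2 := by
        linear_combination e1
      rw [hx]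
      exact dvd_add (hT2.mul_left _) hU32
    rw [hd2eq, mul_assoc] at hd
    have hd' : (p:ℤ_[p]) ∣ (b : ℤ_[p]) * U₂ ^ 2 := (mul_dvd_mul_iff_left hpne).1 hd
    rcases hP.dvd_mul.1 hd' with h | h
    · exact absurd ((dvd_cast_iff b).1 h) hpb
    · exact hP.dvd_of_dvd_pow h
  exact hprim ⟨hT, hU1, hU2, hU3⟩

lemma exists_primitive (n : ℕ) (d₁ d₂ d₃ : ℤ)
    (h : ∃ t u₁ u₂ u₃ : ℚ_[p], ¬(t = 0 ∧ u₁ = 0 ∧ u₂ = 0 ∧ u₃ = 0) ∧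
      -(n : ℚ_[p]) * t ^ 2 + (d₂ : ℚ_[p]) * u₂ ^ 2 - (d₃ : ℚ_[p]) * u₃ ^ 2 = 0 ∧
      -(n : ℚ_[p]) * t ^ 2 + (d₃ : ℚ_[p]) * u₃ ^ 2 - (d₁ : ℚ_[p]) * u₁ ^ 2 = 0 ∧
      2 * (n : ℚ_[p]) * t ^ 2 + (d₁ : ℚ_[p]) * u₁ ^ 2 - (d₂ : ℚ_[p]) * u₂ ^ 2 = 0) :
    ∃ T U₁ U₂ U₃ : ℤ_[p],
      ¬((p:ℤ_[p]) ∣ T ∧ (p:ℤ_[p]) ∣ U₁ ∧ (p:ℤ_[p]) ∣ U₂ ∧ (p:ℤ_[p]) ∣ U₃) ∧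
      -(n : ℤ_[p]) * T ^ 2 + (d₂ : ℤ_[p]) * U₂ ^ 2 - (d₃ : ℤ_[p]) * U₃ ^ 2 = 0 ∧
      -(n : ℤ_[p]) * T ^ 2 + (d₃ : ℤ_[p]) * U₃ ^ 2 - (d₁ : ℤ_[p]) * U₁ ^ 2 = 0 ∧
      2 * (n : ℤ_[p]) * T ^ 2 + (d₁ : ℤ_[p]) * U₁ ^ 2 - (d₂ : ℤ_[p]) * U₂ ^ 2 = 0 := by
  obtain ⟨t, u₁, u₂, u₃, hnz, h1, h2, h3⟩ := h
  -- find a coordinate of maximal norm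
  obtain ⟨c, hct, hcu₁, hcu₂, hcu₃, hcmem⟩ :
      ∃ c : ℚ_[p], ‖t‖ ≤ ‖c‖ ∧ ‖u₁‖ ≤ ‖c‖ ∧ ‖u₂‖ ≤ ‖c‖ ∧ ‖u₃‖ ≤ ‖c‖ ∧
        (c = t ∨ c = u₁ ∨ c = u₂ ∨ c = u₃) := by
    rcases le_total ‖t‖ ‖u₁‖ with h12 | h12 <;>
    rcases le_total ‖u₂‖ ‖u₃‖ with h34 | h34
    · rcases le_total ‖u₁‖ ‖u₃‖ with h | h
      · exact ⟨u₃, by linarith, by linarith, by linarith, le_refl _, by tauto⟩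
      · exact ⟨u₁, by linarith, le_refl _, by linarith, by linarith, by tauto⟩
    · rcases le_total ‖u₁‖ ‖u₂‖ with h | h
      · exact ⟨u₂, by linarith, by linarith, le_refl _, by linarith, by tauto⟩
      · exact ⟨u₁, by linarith, le_refl _, by linarith, by linarith, by tauto⟩
    · rcases le_total ‖t‖ ‖u₃‖ with h | h
      · exact ⟨u₃, by linarith, by linarith, by linarith, le_refl _, by tauto⟩
      · exact ⟨t, le_refl _, by linarith, by linarith, by linarith, by tauto⟩
    · rcases le_total ‖t‖ ‖u₂‖ with h | h
      · exact ⟨u₂, by linarith, by linarith, le_refl _, by linarith, by tauto⟩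
      · exact ⟨t, le_refl _, by linarith, by linarith, by linarith, by tauto⟩
  have hc0 : c ≠ 0 := by
    intro h0
    subst h0
    simp only [norm_zero] at hct hcu₁ hcu₂ hcu₃
    exact hnz ⟨norm_le_zero_iff.1 hct, norm_le_zero_iff.1 hcu₁,
      norm_le_zero_iff.1 hcu₂, norm_le_zero_iff.1 hcu₃⟩
  have hcn : ‖c‖ ≠ 0 := norm_ne_zero_iff.2 hc0
  have hb : ∀ x : ℚ_[p], ‖x‖ ≤ ‖c‖ → ‖x * c⁻¹‖ ≤ 1 := by
    intro x hx
    rw [norm_mul, norm_inv]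
    rw [mul_inv_le_iff₀ (by positivity), one_mul]
    exact hx
  refine ⟨(⟨t * c⁻¹, hb t hct⟩ : ℤ_[p]), (⟨u₁ * c⁻¹, hb u₁ hcu₁⟩ : ℤ_[p]), (⟨u₂ * c⁻¹, hb u₂ hcu₂⟩ : ℤ_[p]),
    (⟨u₃ * c⁻¹, hb u₃ hcu₃⟩ : ℤ_[p]), ?_, ?_, ?_, ?_⟩
  · -- primitivity
    rintro ⟨k1, k2, k3, k4⟩
    have hone : ∀ X : ℤ_[p], (X : ℚ_[p]) = c * c⁻¹ → (p:ℤ_[p]) ∣ X → False := by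
      intro X hX hdvd
      have := (PadicInt.norm_lt_one_iff_dvd X).2 hdvd
      rw [PadicInt.norm_def, hX, mul_inv_cancel₀ hc0, norm_one] at this
      exact lt_irrefl 1 this
    rcases hcmem with rfl | rfl | rfl | rfl
    · exact hone _ rfl k1
    · exact hone _ rfl k2
    · exact hone _ rfl k3
    · exact hone _ rfl k4
  · apply Subtype.ext
    push_cast [PadicInt.coe_natCast, PadicInt.coe_intCast, show ((2:ℤ_[p]):ℚ_[p]) = 2 from rfl]
    erw [PadicInt.coe_pow, PadicInt.coe_pow, PadicInt.coe_pow]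
    linear_combination (c⁻¹) ^ 2 * h1
  · apply Subtype.ext
    push_cast [PadicInt.coe_natCast, PadicInt.coe_intCast, show ((2:ℤ_[p]):ℚ_[p]) = 2 from rfl]
    erw [PadicInt.coe_pow, PadicInt.coe_pow, PadicInt.coe_pow]
    linear_combination (c⁻¹) ^ 2 * h2
  · apply Subtype.ext
    push_cast [PadicInt.coe_natCast, PadicInt.coe_intCast, show ((2:ℤ_[p]):ℚ_[p]) = 2 from rfl]
    erw [PadicInt.coe_pow, PadicInt.coe_pow, PadicInt.coe_pow]
    linear_combination (c⁻¹) ^ 2 * h3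



/-- If the genus-one curve `D_Λ` attached to a triple `Λ = (d₁, d₂, d₃)` of
nonzero squarefree integers with square product is locally solvable over `ℝ` and over every
`ℚ_p`, then `d₂ > 0`, `d₁ ∣ 2n`, `d₂ ∣ 2n` and `d₁ ≡ d₂ (mod 2)`. -/
theorem stmt_0 (n : ℕ) (hnpos : 0 < n) (hnodd : Odd n) (hnsf : Squarefree n)
    (d₁ d₂ d₃ : ℤ) (hd₁ : d₁ ≠ 0) (hd₂ : d₂ ≠ 0) (hd₃ : d₃ ≠ 0)
    (hsf₁ : Squarefree d₁) (hsf₂ : Squarefree d₂) (hsf₃ : Squarefree d₃)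
    (hsq : ∃ m : ℤ, d₁ * d₂ * d₃ = m ^ 2)
    (hR : ∃ t u₁ u₂ u₃ : ℝ, ¬(t = 0 ∧ u₁ = 0 ∧ u₂ = 0 ∧ u₃ = 0) ∧
      -(n : ℝ) * t ^ 2 + (d₂ : ℝ) * u₂ ^ 2 - (d₃ : ℝ) * u₃ ^ 2 = 0 ∧
      -(n : ℝ) * t ^ 2 + (d₃ : ℝ) * u₃ ^ 2 - (d₁ : ℝ) * u₁ ^ 2 = 0 ∧
      2 * (n : ℝ) * t ^ 2 + (d₁ : ℝ) * u₁ ^ 2 - (d₂ : ℝ) * u₂ ^ 2 = 0)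
    (hQp : ∀ (p : ℕ) [Fact p.Prime], ∃ t u₁ u₂ u₃ : ℚ_[p],
      ¬(t = 0 ∧ u₁ = 0 ∧ u₂ = 0 ∧ u₃ = 0) ∧
      -(n : ℚ_[p]) * t ^ 2 + (d₂ : ℚ_[p]) * u₂ ^ 2 - (d₃ : ℚ_[p]) * u₃ ^ 2 = 0 ∧
      -(n : ℚ_[p]) * t ^ 2 + (d₃ : ℚ_[p]) * u₃ ^ 2 - (d₁ : ℚ_[p]) * u₁ ^ 2 = 0 ∧
      2 * (n : ℚ_[p]) * t ^ 2 + (d₁ : ℚ_[p]) * u₁ ^ 2 - (d₂ : ℚ_[p]) * u₂ ^ 2 = 0) :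
    0 < d₂ ∧ d₁ ∣ 2 * (n : ℤ) ∧ d₂ ∣ 2 * (n : ℤ) ∧ d₁ % 2 = d₂ % 2 := by
  obtain ⟨m, hm⟩ := hsq
  have hd2pos : 0 < d₂ := d2_pos n hnpos d₁ d₂ d₃ hd₁ hd₂ hd₃ m hm hR
  have noA1 : ∀ (p : ℕ), p.Prime → ¬ (p:ℤ) ∣ (n:ℤ) → (p:ℤ) ∣ d₁ → (p:ℤ) ∣ d₃ →
      ¬ (p:ℤ) ∣ d₂ → False := by
    intro p hpp hn h1 h3 h2
    haveI : Fact p.Prime := ⟨hpp⟩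
    obtain ⟨T, U₁, U₂, U₃, hprim, e1, e2, e3⟩ := exists_primitive n d₁ d₂ d₃ (hQp p)
    exact caseA1 n d₁ d₂ d₃ hn h1 h3 h2 hsf₁ hsf₃ T U₁ U₂ U₃ e1 e2 e3 hprim
  have noA2 : ∀ (p : ℕ), p.Prime → p ≠ 2 → ¬ (p:ℤ) ∣ (n:ℤ) → (p:ℤ) ∣ d₁ → (p:ℤ) ∣ d₂ →
      ¬ (p:ℤ) ∣ d₃ → False := by
    intro p hpp hp2 hn h1 h2 h3
    haveI : Fact p.Prime := ⟨hpp⟩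
    obtain ⟨T, U₁, U₂, U₃, hprim, e1, e2, e3⟩ := exists_primitive n d₁ d₂ d₃ (hQp p)
    exact caseA2 n d₁ d₂ d₃ hp2 hn h1 h2 h3 hsf₁ hsf₂ T U₁ U₂ U₃ e1 e2 e3 hprim
  have noC : ∀ (p : ℕ), p.Prime → ¬ (p:ℤ) ∣ (n:ℤ) → ¬ (p:ℤ) ∣ d₁ → (p:ℤ) ∣ d₂ →
      (p:ℤ) ∣ d₃ → False := by
    intro p hpp hn h1 h2 h3
    haveI : Fact p.Prime := ⟨hpp⟩
    obtain ⟨T, U₁, U₂, U₃, hprim, e1, e2, e3⟩ := exists_primitive n d₁ d₂ d₃ (hQp p)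
    exact caseC n d₁ d₂ d₃ hn h1 h2 h3 hsf₂ hsf₃ T U₁ U₂ U₃ e1 e2 e3 hprim
  have hnoddZ : ¬ (2:ℤ) ∣ (n:ℤ) := by
    rcases hnodd with ⟨k, hk⟩
    omega
  have hm' : d₂ * d₁ * d₃ = m ^ 2 := by linear_combination hm
  have hdvd1 : d₁ ∣ 2 * (n:ℤ) := by
    by_contra hndvd
    obtain ⟨p, hpp, hpd, hpb⟩ := pick hd₁ hsf₁ hndvd
    have hpn : ¬ (p:ℤ) ∣ (n:ℤ) := fun h => hpb (h.mul_left 2)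
    have hp2 : p ≠ 2 := by
      rintro rfl
      exact hpb ⟨(n:ℤ), by push_cast; ring⟩
    have hq : Prime (p:ℤ) := Nat.prime_iff_prime_int.1 hpp
    rcases tri hq hsf₁ hsf₂ hsf₃ hm hpd with ⟨h2, h3⟩ | ⟨h3, h2⟩
    · exact noA2 p hpp hp2 hpn hpd h2 h3
    · exact noA1 p hpp hpn hpd h3 h2
  have hdvd2 : d₂ ∣ 2 * (n:ℤ) := by
    by_contra hndvd
    obtain ⟨p, hpp, hpd, hpb⟩ := pick hd₂ hsf₂ hndvd
    have hpn : ¬ (p:ℤ) ∣ (n:ℤ) := fun h => hpb (h.mul_left 2)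
    have hp2 : p ≠ 2 := by
      rintro rfl
      exact hpb ⟨(n:ℤ), by push_cast; ring⟩
    have hq : Prime (p:ℤ) := Nat.prime_iff_prime_int.1 hpp
    rcases tri hq hsf₂ hsf₁ hsf₃ hm' hpd with ⟨h1, h3⟩ | ⟨h3, h1⟩
    · exact noA2 p hpp hp2 hpn h1 hpd h3
    · exact noC p hpp hpn h1 hpd h3
  have hcast2 : ((2:ℕ):ℤ) = 2 := by norm_num
  have hn2 : ¬ ((2:ℕ):ℤ) ∣ (n:ℤ) := by rw [hcast2]; exact hnoddZ
  have hiff : (2:ℤ) ∣ d₁ ↔ (2:ℤ) ∣ d₂ := by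
    have hq2 : Prime (2:ℤ) := Int.prime_two
    constructor
    · intro h1
      by_contra h2'
      rcases tri hq2 hsf₁ hsf₂ hsf₃ hm h1 with ⟨h2, _⟩ | ⟨h3, h2⟩
      · exact h2' h2
      · exact noA1 2 Nat.prime_two hn2 (by rw [hcast2]; exact h1) (by rw [hcast2]; exact h3)
          (by rw [hcast2]; exact h2)
    · intro h2
      by_contra h1'
      rcases tri hq2 hsf₂ hsf₁ hsf₃ hm' h2 with ⟨h1, _⟩ | ⟨h3, h1⟩
      · exact h1' h1
      · exact noC 2 Nat.prime_two hn2 (by rw [hcast2]; exact h1) (by rw [hcast2]; exact h2)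
          (by rw [hcast2]; exact h3)
  exact ⟨hd2pos, hdvd1, hdvd2, by omega⟩
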